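/- Let A be a unital C*-algebra, let p₁, p₂ ∈ A be projections, let q₁, q₂ ∈ A be self-adjoint elements with ‖q₁ − p₁‖ ≤ δ and ‖q₂ − p₂‖ ≤ δ, where 0 ≤ δ ≤ 1/2. In the C*-algebra of 2×2 matrices over A, set v_p := [[p₂, 1−p₂],[1−p₂, p₂]], v_q := [[q₂, 1−q₂],[1−q₂, q₂]], d_p := diag(p₁, 1−p₂), and d_q := diag(q₁, 1−q₂). Then ‖v_q·d_q·v_q − v_p·d_p·v_p‖ ≤ 10δ. -/

import Mathlib

open Matrix

section Aux
variable {A B : Type*} [CStarAlgebra A] [CStarAlgebra B]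

noncomputable def diagStarHom (φ : Matrix (Fin 2) (Fin 2) A ≃⋆ₐ[ℂ] B) : A →⋆ₙₐ[ℂ] B where
  toFun a := φ (Matrix.diagonal fun _ => a)
  map_smul' c a := by
    show φ _ = c • φ _
    rw [← _root_.map_smul]
    congr 1
    ext i j
    by_cases h : i = j <;> simp [Matrix.diagonal, h]
  map_zero' := by simp
  map_add' a b := by
    show φ _ = φ _ + φ _
    rw [← map_add]; congr 1
    ext i j
    by_cases h : i = j <;> simp [Matrix.diagonal, h]
  map_mul' a b := by
    show φ _ = φ _ * φ _
    rw [← _root_.map_mul]; congr 1; rw [Matrix.diagonal_mul_diagonal]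
  map_star' a := by
    show φ _ = star (φ _)
    rw [← map_star]; congr 1
    rw [Matrix.star_eq_conjTranspose, Matrix.diagonal_conjTranspose]
    rfl

lemma diag_norm_le (φ : Matrix (Fin 2) (Fin 2) A ≃⋆ₐ[ℂ] B) (a : A) :
    ‖φ (Matrix.diagonal fun _ => a)‖ ≤ ‖a‖ :=
  NonUnitalStarAlgHom.norm_apply_le (diagStarHom φ) a

lemma diagonal_eq_ff (a : A) : (Matrix.diagonal fun _ => a) = !![a, 0; 0, a] := by
  ext i j; fin_cases i <;> fin_cases j <;> simp [Matrix.diagonal]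

/-- self-adjoint square-root-of-a-multiple norm bounds -/
lemma sa_norm_sq (x : B) (hx : IsSelfAdjoint x) : ‖x‖ * ‖x‖ = ‖x * x‖ := by
  have h := CStarRing.norm_star_mul_self (x := x)
  rw [hx.star_eq] at h
  exact h.symm

lemma norm_one_le_one : ‖(1 : B)‖ ≤ 1 := by
  have h := sa_norm_sq (1 : B) (IsSelfAdjoint.one B)
  rw [mul_one] at h
  nlinarith [norm_nonneg (1 : B)]

lemma idem_norm_le (x : B) (hx : IsSelfAdjoint x) (hxx : x * x = x) : ‖x‖ ≤ 1 := by
  have h := sa_norm_sq x hx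
  rw [hxx] at h
  nlinarith [norm_nonneg x]

lemma invol_norm_le (x : B) (hx : IsSelfAdjoint x) (hxx : x * x = 1) : ‖x‖ ≤ 1 := by
  have h := sa_norm_sq x hx
  rw [hxx] at h
  nlinarith [norm_nonneg x, norm_one_le_one (B := B)]

lemma double_norm_le (x : B) (hx : IsSelfAdjoint x) (hxx : x * x = x + x) : ‖x‖ ≤ 2 := by
  have h := sa_norm_sq x hx
  rw [hxx] at h
  have := norm_add_le x x
  nlinarith [norm_nonneg x]

/-- self-adjointness of 2x2 matrices with self-adjoint entries placed symmetrically -/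
lemma isSelfAdjoint_ff {a b c d : A} (ha : IsSelfAdjoint a) (hd : IsSelfAdjoint d)
    (hb : IsSelfAdjoint b) (hbc : b = c) : IsSelfAdjoint !![a, b; c, d] := by
  have : star !![a, b; c, d] = !![a, b; c, d] := by
    rw [Matrix.star_eq_conjTranspose]
    ext i j
    fin_cases i <;> fin_cases j <;>
      simp [Matrix.conjTranspose_apply, ha.star_eq, hd.star_eq, hb.star_eq, ← hbc]
  exact this

lemma corner_norm_le (φ : Matrix (Fin 2) (Fin 2) A ≃⋆ₐ[ℂ] B) (u : A) :
    ‖φ !![u, 0; 0, 0]‖ ≤ ‖u‖ := by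
  have hfac : !![u, 0; 0, 0] = (Matrix.diagonal fun _ => u) * !![1, 0; 0, 0] := by
    rw [diagonal_eq_ff, Matrix.mul_fin_two]
    simp
  have hproj : ‖φ !![(1:A), 0; 0, 0]‖ ≤ 1 := by
    apply idem_norm_le _ ((isSelfAdjoint_ff ((IsSelfAdjoint.one A))
      ((IsSelfAdjoint.zero A)) ((IsSelfAdjoint.zero A)) rfl).map φ)
    rw [← _root_.map_mul, Matrix.mul_fin_two]
    norm_num
  calc ‖φ !![u, 0; 0, 0]‖
      = ‖φ (Matrix.diagonal fun _ => u) * φ !![(1:A), 0; 0, 0]‖ := by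
        rw [← _root_.map_mul, ← hfac]
    _ ≤ ‖φ (Matrix.diagonal fun _ => u)‖ * ‖φ !![(1:A), 0; 0, 0]‖ := norm_mul_le _ _
    _ ≤ ‖u‖ * 1 := mul_le_mul (diag_norm_le φ u) hproj (norm_nonneg _) (norm_nonneg _)
    _ = ‖u‖ := mul_one _

lemma corner_norm_le' (φ : Matrix (Fin 2) (Fin 2) A ≃⋆ₐ[ℂ] B) (v : A) :
    ‖φ !![0, 0; 0, v]‖ ≤ ‖v‖ := by
  have hfac : !![(0:A), 0; 0, v] = (Matrix.diagonal fun _ => v) * !![0, 0; 0, 1] := by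
    rw [diagonal_eq_ff, Matrix.mul_fin_two]
    simp
  have hproj : ‖φ !![(0:A), 0; 0, 1]‖ ≤ 1 := by
    apply idem_norm_le _ ((isSelfAdjoint_ff ((IsSelfAdjoint.zero A))
      ((IsSelfAdjoint.one A)) ((IsSelfAdjoint.zero A)) rfl).map φ)
    rw [← _root_.map_mul, Matrix.mul_fin_two]
    norm_num
  calc ‖φ !![(0:A), 0; 0, v]‖
      = ‖φ (Matrix.diagonal fun _ => v) * φ !![(0:A), 0; 0, 1]‖ := by
        rw [← _root_.map_mul, ← hfac]
    _ ≤ ‖φ (Matrix.diagonal fun _ => v)‖ * ‖φ !![(0:A), 0; 0, 1]‖ := norm_mul_le _ _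
    _ ≤ ‖v‖ * 1 := mul_le_mul (diag_norm_le φ v) hproj (norm_nonneg _) (norm_nonneg _)
    _ = ‖v‖ := mul_one _

lemma diag_pair_norm_le (φ : Matrix (Fin 2) (Fin 2) A ≃⋆ₐ[ℂ] B) {a b : A}
    (ha : IsSelfAdjoint a) (hb : IsSelfAdjoint b) {r : ℝ}
    (hna : ‖a‖ ≤ r) (hnb : ‖b‖ ≤ r) : ‖φ !![a, 0; 0, b]‖ ≤ r := by
  have hr0 : 0 ≤ r := (norm_nonneg a).trans hna
  -- the key iterated-square identity
  have key : ∀ n : ℕ, ‖φ !![a, 0; 0, b]‖ ^ (2 ^ n) = ‖φ !![a ^ 2 ^ n, 0; 0, b ^ 2 ^ n]‖ := by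
    intro n
    induction n with
    | zero => simp
    | succ n ih =>
      have hsa : IsSelfAdjoint (φ !![a ^ 2 ^ n, 0; 0, b ^ 2 ^ n]) :=
        (isSelfAdjoint_ff (ha.pow _) (hb.pow _) ((IsSelfAdjoint.zero A)) rfl).map φ
      have hsq : φ !![a ^ 2 ^ n, 0; 0, b ^ 2 ^ n] * φ !![a ^ 2 ^ n, 0; 0, b ^ 2 ^ n]
          = φ !![a ^ (2 ^ n * 2), 0; 0, b ^ (2 ^ n * 2)] := by
        rw [← _root_.map_mul, Matrix.mul_fin_two]
        congr 1
        simp [← pow_add, mul_two]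
      rw [pow_succ, pow_mul, ih, sq, sa_norm_sq _ hsa, hsq]
  -- the splitting bound
  have bound : ∀ n : ℕ, ‖φ !![a, 0; 0, b]‖ ^ (2 ^ n) ≤ 2 * r ^ (2 ^ n) := by
    intro n
    rw [key n]
    have hsplit : !![a ^ 2 ^ n, 0; 0, b ^ 2 ^ n]
        = !![a ^ 2 ^ n, 0; 0, 0] + !![0, 0; 0, b ^ 2 ^ n] := by
      ext i j; fin_cases i <;> fin_cases j <;> simp
    have hpos : 0 < 2 ^ n := Nat.pow_pos (by norm_num)
    calc ‖φ !![a ^ 2 ^ n, 0; 0, b ^ 2 ^ n]‖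
        ≤ ‖φ !![a ^ 2 ^ n, 0; 0, 0]‖ + ‖φ !![(0:A), 0; 0, b ^ 2 ^ n]‖ := by
          rw [hsplit, map_add]; exact norm_add_le _ _
      _ ≤ ‖a ^ 2 ^ n‖ + ‖b ^ 2 ^ n‖ := add_le_add (corner_norm_le φ _) (corner_norm_le' φ _)
      _ ≤ ‖a‖ ^ 2 ^ n + ‖b‖ ^ 2 ^ n := add_le_add (norm_pow_le' a hpos) (norm_pow_le' b hpos)
      _ ≤ r ^ 2 ^ n + r ^ 2 ^ n :=
          add_le_add (pow_le_pow_left₀ (norm_nonneg a) hna _) (pow_le_pow_left₀ (norm_nonneg b) hnb _)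
      _ = 2 * r ^ 2 ^ n := by ring
  by_contra hlt
  push_neg at hlt
  rcases eq_or_lt_of_le hr0 with hr | hr
  · have h0 := bound 0
    rw [← hr] at h0 hlt
    have h0' : ‖φ !![a, 0; 0, b]‖ ≤ 0 := by simpa using h0
    linarith
  · set t : ℝ := ‖φ !![a, 0; 0, b]‖ / r with ht
    have ht1 : 1 < t := (one_lt_div hr).mpr hlt
    obtain ⟨n, hn⟩ := pow_unbounded_of_one_lt (2 : ℝ) ht1
    have hmono : t ^ n ≤ t ^ (2 ^ n) :=
      pow_le_pow_right₀ ht1.le (Nat.le_of_lt (Nat.lt_two_pow_self (n := n)))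
    have h2 : 2 < t ^ (2 ^ n) := hn.trans_le hmono
    rw [ht, div_pow] at h2
    have hrp : (0:ℝ) < r ^ (2 ^ n) := pow_pos hr _
    rw [lt_div_iff₀ hrp] at h2
    exact absurd (bound n) (not_le.mpr h2)

end Aux

/-- perturbation estimate for the rotated difference-class representatives in
2×2 matrices over a unital C*-algebra.  Since the C*-norm on `M₂(A)` is unique, we express
it via an arbitrary star-algebra isomorphism `φ` of `M₂(A)` with a C*-algebra `B`. -/
theorem rotated_difference_class_perturbation {A B : Type*}
    [CStarAlgebra A] [CStarAlgebra B]
    (φ : Matrix (Fin 2) (Fin 2) A ≃⋆ₐ[ℂ] B)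
    (p₁ p₂ : A) (hp₁ : IsSelfAdjoint p₁) (hp₁idem : p₁ * p₁ = p₁)
    (hp₂ : IsSelfAdjoint p₂) (hp₂idem : p₂ * p₂ = p₂)
    (q₁ q₂ : A) (hq₁ : IsSelfAdjoint q₁) (hq₂ : IsSelfAdjoint q₂)
    (δ : ℝ) (hδ0 : 0 ≤ δ) (hδ : δ ≤ 1 / 2)
    (h₁ : ‖q₁ - p₁‖ ≤ δ) (h₂ : ‖q₂ - p₂‖ ≤ δ) :
    ‖φ (!![q₂, 1 - q₂; 1 - q₂, q₂] * !![q₁, 0; 0, 1 - q₂] * !![q₂, 1 - q₂; 1 - q₂, q₂])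
      - φ (!![p₂, 1 - p₂; 1 - p₂, p₂] * !![p₁, 0; 0, 1 - p₂] * !![p₂, 1 - p₂; 1 - p₂, p₂])‖
      ≤ 10 * δ := by
  set Vq : Matrix (Fin 2) (Fin 2) A := !![q₂, 1 - q₂; 1 - q₂, q₂] with hVq
  set Vp : Matrix (Fin 2) (Fin 2) A := !![p₂, 1 - p₂; 1 - p₂, p₂] with hVp
  set Dq : Matrix (Fin 2) (Fin 2) A := !![q₁, 0; 0, 1 - q₂] with hDq
  set Dp : Matrix (Fin 2) (Fin 2) A := !![p₁, 0; 0, 1 - p₂] with hDp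
  set vq : B := φ Vq with hvqdef
  set vp : B := φ Vp with hvpdef
  set dq : B := φ Dq with hdqdef
  set dp : B := φ Dp with hdpdef
  have hgoal : φ (Vq * Dq * Vq) - φ (Vp * Dp * Vp)
      = vq * (dq - dp) * vq + vq * dp * (vq - vp) + (vq - vp) * dp * vp := by
    rw [_root_.map_mul, _root_.map_mul, _root_.map_mul, _root_.map_mul]
    noncomm_ring
  rw [hgoal]
  -- ‖vp‖ ≤ 1
  have hsaVp : IsSelfAdjoint Vp :=
    isSelfAdjoint_ff hp₂ hp₂ ((IsSelfAdjoint.one A).sub hp₂) rfl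
  have hVpsq : Vp * Vp = 1 := by
    rw [hVp, Matrix.mul_fin_two, Matrix.one_fin_two]
    ext i j
    fin_cases i <;> fin_cases j <;> simp [mul_sub, sub_mul, hp₂idem] <;> abel
  have hvp : ‖vp‖ ≤ 1 := by
    apply invol_norm_le _ (hsaVp.map φ)
    rw [← _root_.map_mul, hVpsq, _root_.map_one]
  -- ‖vq - vp‖ ≤ 2 * δ
  have hW : ‖φ !![(1:A), -1; -1, 1]‖ ≤ 2 := by
    apply double_norm_le _ ((isSelfAdjoint_ff (IsSelfAdjoint.one A)
      (IsSelfAdjoint.one A) (IsSelfAdjoint.one A).neg rfl).map φ)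
    rw [← _root_.map_mul, ← map_add, Matrix.mul_fin_two]
    congr 2
    ext i j
    fin_cases i <;> fin_cases j <;> simp <;> abel
  have hVqVp : Vq - Vp = (Matrix.diagonal fun _ => q₂ - p₂) * !![(1:A), -1; -1, 1] := by
    rw [diagonal_eq_ff, Matrix.mul_fin_two, hVq, hVp]
    ext i j
    fin_cases i <;> fin_cases j <;> simp <;> abel
  have hvqvp : ‖vq - vp‖ ≤ 2 * δ := by
    calc ‖vq - vp‖ = ‖φ (Matrix.diagonal fun _ => q₂ - p₂) * φ !![(1:A), -1; -1, 1]‖ := by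
          rw [hvqdef, hvpdef, ← map_sub, hVqVp, _root_.map_mul]
      _ ≤ ‖φ (Matrix.diagonal fun _ => q₂ - p₂)‖ * ‖φ !![(1:A), -1; -1, 1]‖ := norm_mul_le _ _
      _ ≤ δ * 2 := mul_le_mul ((diag_norm_le φ _).trans h₂) hW (norm_nonneg _)
          ((norm_nonneg _).trans ((diag_norm_le φ _).trans h₂))
      _ = 2 * δ := mul_comm _ _
  -- ‖vq‖ ≤ 2
  have hvq : ‖vq‖ ≤ 2 := by
    calc ‖vq‖ = ‖vp + (vq - vp)‖ := by rw [show vp + (vq - vp) = vq from by abel]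
      _ ≤ ‖vp‖ + ‖vq - vp‖ := norm_add_le _ _
      _ ≤ 1 + 2 * δ := add_le_add hvp hvqvp
      _ ≤ 2 := by linarith
  -- ‖dp‖ ≤ 1
  have hdp : ‖dp‖ ≤ 1 := by
    apply idem_norm_le _ ((isSelfAdjoint_ff hp₁ ((IsSelfAdjoint.one A).sub hp₂)
      (IsSelfAdjoint.zero A) rfl).map φ)
    rw [← _root_.map_mul]
    congr 1
    rw [Matrix.mul_fin_two]
    ext i j
    fin_cases i <;> fin_cases j <;> simp [mul_sub, sub_mul, hp₁idem, hp₂idem] <;> abel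
  -- ‖dq - dp‖ ≤ δ
  have hDqDp : Dq - Dp = !![q₁ - p₁, 0; 0, p₂ - q₂] := by
    rw [hDq, hDp]
    ext i j
    fin_cases i <;> fin_cases j <;> simp <;> abel
  have hdqdp : ‖dq - dp‖ ≤ δ := by
    rw [hdqdef, hdpdef, ← map_sub, hDqDp]
    apply diag_pair_norm_le φ (hq₁.sub hp₁) (hp₂.sub hq₂) h₁
    rwa [← norm_neg, neg_sub]
  -- assemble
  have nonneg2 : (0:ℝ) ≤ 2 := by norm_num
  have t1 : ‖vq * (dq - dp) * vq‖ ≤ 4 * δ := by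
    calc ‖vq * (dq - dp) * vq‖ ≤ ‖vq * (dq - dp)‖ * ‖vq‖ := norm_mul_le _ _
      _ ≤ ‖vq‖ * ‖dq - dp‖ * ‖vq‖ :=
          mul_le_mul_of_nonneg_right (norm_mul_le _ _) (norm_nonneg _)
      _ ≤ 2 * δ * 2 := mul_le_mul (mul_le_mul hvq hdqdp (norm_nonneg _) nonneg2) hvq
          (norm_nonneg _) (by positivity)
      _ = 4 * δ := by ring
  have t2 : ‖vq * dp * (vq - vp)‖ ≤ 4 * δ := by
    calc ‖vq * dp * (vq - vp)‖ ≤ ‖vq * dp‖ * ‖vq - vp‖ := norm_mul_le _ _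
      _ ≤ ‖vq‖ * ‖dp‖ * ‖vq - vp‖ :=
          mul_le_mul_of_nonneg_right (norm_mul_le _ _) (norm_nonneg _)
      _ ≤ 2 * 1 * (2 * δ) := mul_le_mul (mul_le_mul hvq hdp (norm_nonneg _) nonneg2) hvqvp
          (norm_nonneg _) (by positivity)
      _ = 4 * δ := by ring
  have t3 : ‖(vq - vp) * dp * vp‖ ≤ 2 * δ := by
    calc ‖(vq - vp) * dp * vp‖ ≤ ‖(vq - vp) * dp‖ * ‖vp‖ := norm_mul_le _ _
      _ ≤ ‖vq - vp‖ * ‖dp‖ * ‖vp‖ :=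
          mul_le_mul_of_nonneg_right (norm_mul_le _ _) (norm_nonneg _)
      _ ≤ 2 * δ * 1 * 1 := mul_le_mul (mul_le_mul hvqvp hdp (norm_nonneg _) (by positivity)) hvp
          (norm_nonneg _) (by positivity)
      _ = 2 * δ := by ring
  calc ‖vq * (dq - dp) * vq + vq * dp * (vq - vp) + (vq - vp) * dp * vp‖
      ≤ ‖vq * (dq - dp) * vq + vq * dp * (vq - vp)‖ + ‖(vq - vp) * dp * vp‖ := norm_add_le _ _
    _ ≤ ‖vq * (dq - dp) * vq‖ + ‖vq * dp * (vq - vp)‖ + ‖(vq - vp) * dp * vp‖ :=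
        add_le_add_left (norm_add_le _ _) _
    _ ≤ 4 * δ + 4 * δ + 2 * δ := add_le_add (add_le_add t1 t2) t3
    _ = 10 * δ := by ring
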